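/- Let H_A ⊗ H_B and H̃_A ⊗ H̃_B be Hilbert spaces, |ψ⟩ ∈ H_A ⊗ H_B and |φ⟩ ∈ H̃_A ⊗ H̃_B, m > 1, operators A_j on H_A with ‖A_j‖ ≤ 1 and Ã_j on H̃_A for j = 1,…,m. Let V = V_A ⊗ V_B be a local isometry (V_A: H_A → H̃_A, V_B: H_B → H̃_B) with ‖V|ψ⟩ − |φ⟩‖ ≤ δ and ‖V(A_j ⊗ I)|ψ⟩ − (Ã_j ⊗ I)|φ⟩‖ ≤ δ for all j. Suppose for each j there exists B̃_j on H̃_B with ‖B̃_j‖ ≤ 1 such that (Ã_j ⊗ I)|φ⟩ = (I ⊗ B̃_j)|φ⟩. Then ‖V(A₁⋯A_m ⊗ I)|ψ⟩ − (Ã₁⋯Ã_m ⊗ I)|φ⟩‖ ≤ (2m + 1)δ. -/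

import Mathlib

open scoped Kronecker

set_option maxHeartbeats 1000000

open Matrix
section SelfTestAux

set_option linter.unusedSectionVars false

noncomputable def stClm {n m : Type*} [Fintype n] [Fintype m] [DecidableEq m] (M : Matrix n m ℂ) :
    EuclideanSpace ℂ m →L[ℂ] EuclideanSpace ℂ n :=
  LinearMap.toContinuousLinearMap (Matrix.toEuclideanLin M)

variable {n m l : Type*} [Fintype n] [Fintype m] [Fintype l]
  [DecidableEq n] [DecidableEq m] [DecidableEq l]

lemma stClm_apply (M : Matrix n m ℂ) (x : EuclideanSpace ℂ m) :
    stClm M x = Matrix.toEuclideanLin M x := rfl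

lemma stClm_mul (M : Matrix n m ℂ) (N : Matrix m l ℂ)
    (x : EuclideanSpace ℂ l) : stClm (M * N) x = stClm M (stClm N x) := by
  simp only [stClm_apply, Matrix.toEuclideanLin_apply]
  congr 1
  rw [Matrix.mulVec_mulVec]

lemma stClm_one (x : EuclideanSpace ℂ n) : stClm (1 : Matrix n n ℂ) x = x := by
  rw [stClm_apply, Matrix.toEuclideanLin_apply]
  ext i
  simp

lemma norm_stClm_one : ‖stClm (1 : Matrix n n ℂ)‖ ≤ 1 := by
  refine ContinuousLinearMap.opNorm_le_bound _ zero_le_one (fun x => ?_)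
  rw [stClm_one, one_mul]

lemma norm_stClm_mul (M : Matrix n m ℂ) (N : Matrix m l ℂ) :
    ‖stClm (M * N)‖ ≤ ‖stClm M‖ * ‖stClm N‖ := by
  refine ContinuousLinearMap.opNorm_le_bound _ (by positivity) (fun x => ?_)
  rw [stClm_mul, mul_assoc]
  exact ((stClm M).le_opNorm _).trans
    (mul_le_mul_of_nonneg_left ((stClm N).le_opNorm x) (norm_nonneg _))

lemma stClm_isometry (V : Matrix n m ℂ)
    (hV : V.conjTranspose * V = 1) (x : EuclideanSpace ℂ m) : ‖stClm V x‖ = ‖x‖ := by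
  have h : (inner ℂ (stClm V x) (stClm V x) : ℂ) = inner ℂ x x := by
    rw [stClm_apply]
    have h2 : (inner ℂ ((Matrix.toEuclideanLin V) x) ((Matrix.toEuclideanLin V) x) : ℂ)
        = inner ℂ (Matrix.toEuclideanLin V.conjTranspose ((Matrix.toEuclideanLin V) x)) x := by
      rw [Matrix.toEuclideanLin_conjTranspose_eq_adjoint, LinearMap.adjoint_inner_left]
    rw [h2, ← stClm_apply, ← stClm_apply, ← stClm_mul, hV, stClm_one]
  rw [norm_eq_sqrt_re_inner (𝕜 := ℂ), norm_eq_sqrt_re_inner (𝕜 := ℂ), h]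

lemma norm_stClm_isometry (V : Matrix n m ℂ)
    (hV : V.conjTranspose * V = 1) : ‖stClm V‖ ≤ 1 := by
  refine ContinuousLinearMap.opNorm_le_bound _ zero_le_one (fun x => ?_)
  rw [stClm_isometry V hV, one_mul]

lemma stClm_conjTranspose (M : Matrix n m ℂ) :
    stClm M.conjTranspose = ContinuousLinearMap.adjoint (stClm M) := by
  show LinearMap.toContinuousLinearMap (Matrix.toEuclideanLin M.conjTranspose) = _
  rw [Matrix.toEuclideanLin_conjTranspose_eq_adjoint,
    LinearMap.adjoint_toContinuousLinearMap]
  rfl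

lemma norm_stClm_conjTranspose (M : Matrix n m ℂ) : ‖stClm M.conjTranspose‖ = ‖stClm M‖ := by
  rw [stClm_conjTranspose]
  exact ContinuousLinearMap.adjoint.norm_map _

lemma st_euclid_norm_sq {ι : Type*} [Fintype ι] (v : EuclideanSpace ℂ ι) :
    ‖v‖ ^ 2 = ∑ i, ‖v i‖ ^ 2 := by
  rw [EuclideanSpace.norm_eq, Real.sq_sqrt]
  positivity

lemma st_euclid_comp_apply (P : Matrix n m ℂ) (v : EuclideanSpace ℂ m)
    (i : n) : (Matrix.toEuclideanLin P v) i = ∑ j, P i j * v j := by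
  rw [Matrix.toEuclideanLin_apply]
  show (P *ᵥ (fun j => v j)) i = _
  simp [Matrix.mulVec, dotProduct]

variable {a a' b b' : ℕ}

lemma st_kron_one_apply (P : Matrix (Fin a') (Fin a) ℂ)
    (x : EuclideanSpace ℂ (Fin a × Fin b)) (i : Fin a') (c : Fin b) :
    (Matrix.toEuclideanLin (P ⊗ₖ (1 : Matrix (Fin b) (Fin b) ℂ)) x) (i, c) =
      ∑ j, P i j * x (j, c) := by
  rw [Matrix.toEuclideanLin_apply]
  show ((P ⊗ₖ (1 : Matrix (Fin b) (Fin b) ℂ)) *ᵥ (fun p => x p)) (i, c) = _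
  simp [Matrix.mulVec, dotProduct, Fintype.sum_prod_type, Matrix.one_apply,
    mul_ite, ite_mul, mul_comm]

lemma st_one_kron_apply (Q : Matrix (Fin b') (Fin b) ℂ)
    (x : EuclideanSpace ℂ (Fin a × Fin b)) (i : Fin a) (c : Fin b') :
    (Matrix.toEuclideanLin ((1 : Matrix (Fin a) (Fin a) ℂ) ⊗ₖ Q) x) (i, c) =
      ∑ d, Q c d * x (i, d) := by
  rw [Matrix.toEuclideanLin_apply]
  show (((1 : Matrix (Fin a) (Fin a) ℂ) ⊗ₖ Q) *ᵥ (fun p => x p)) (i, c) = _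
  simp [Matrix.mulVec, dotProduct, Fintype.sum_prod_type, Matrix.one_apply,
    mul_ite, ite_mul, mul_comm]

lemma st_sq_le_imp_le {x y : ℝ} (hy : 0 ≤ y) (h : x ^ 2 ≤ y ^ 2) (hx : 0 ≤ x) : x ≤ y := by
  have := Real.sqrt_le_sqrt h
  rwa [Real.sqrt_sq hx, Real.sqrt_sq hy] at this

lemma norm_stClm_kron_one (P : Matrix (Fin a') (Fin a) ℂ) :
    ‖stClm (P ⊗ₖ (1 : Matrix (Fin b) (Fin b) ℂ))‖ ≤ ‖stClm P‖ := by
  refine ContinuousLinearMap.opNorm_le_bound _ (norm_nonneg _) (fun x => ?_)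
  set xc : Fin b → EuclideanSpace ℂ (Fin a) :=
    fun c => (WithLp.equiv 2 (Fin a → ℂ)).symm (fun j => x (j, c)) with hxc
  have hx : ‖x‖ ^ 2 = ∑ c, ‖xc c‖ ^ 2 := by
    simp only [st_euclid_norm_sq]
    rw [Fintype.sum_prod_type, Finset.sum_comm]
    rfl
  have hy : ‖stClm (P ⊗ₖ (1 : Matrix (Fin b) (Fin b) ℂ)) x‖ ^ 2 =
      ∑ c, ‖stClm P (xc c)‖ ^ 2 := by
    simp only [st_euclid_norm_sq]
    rw [Fintype.sum_prod_type, Finset.sum_comm]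
    congr 1
    funext c
    congr 1
    funext i
    rw [stClm_apply, stClm_apply, st_kron_one_apply, st_euclid_comp_apply]
    rfl
  refine st_sq_le_imp_le (by positivity) ?_ (norm_nonneg _)
  rw [hy, mul_pow, hx, Finset.mul_sum]
  refine Finset.sum_le_sum (fun c _ => ?_)
  rw [← mul_pow]
  exact pow_le_pow_left₀ (norm_nonneg _) ((stClm P).le_opNorm (xc c)) 2

lemma norm_one_kron_stClm (Q : Matrix (Fin b') (Fin b) ℂ) :
    ‖stClm ((1 : Matrix (Fin a) (Fin a) ℂ) ⊗ₖ Q)‖ ≤ ‖stClm Q‖ := by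
  refine ContinuousLinearMap.opNorm_le_bound _ (norm_nonneg _) (fun x => ?_)
  set xc : Fin a → EuclideanSpace ℂ (Fin b) :=
    fun i => (WithLp.equiv 2 (Fin b → ℂ)).symm (fun d => x (i, d)) with hxc
  have hx : ‖x‖ ^ 2 = ∑ i, ‖xc i‖ ^ 2 := by
    simp only [st_euclid_norm_sq]
    rw [Fintype.sum_prod_type]
    rfl
  have hy : ‖stClm ((1 : Matrix (Fin a) (Fin a) ℂ) ⊗ₖ Q) x‖ ^ 2 =
      ∑ i, ‖stClm Q (xc i)‖ ^ 2 := by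
    simp only [st_euclid_norm_sq]
    rw [Fintype.sum_prod_type]
    congr 1
    funext i
    congr 1
    funext c
    rw [stClm_apply, stClm_apply, st_one_kron_apply, st_euclid_comp_apply]
    rfl
  refine st_sq_le_imp_le (by positivity) ?_ (norm_nonneg _)
  rw [hy, mul_pow, hx, Finset.mul_sum]
  refine Finset.sum_le_sum (fun c _ => ?_)
  rw [← mul_pow]
  exact pow_le_pow_left₀ (norm_nonneg _) ((stClm Q).le_opNorm (xc c)) 2

lemma st_toEuclideanCLM_eq (M : Matrix n n ℂ) :
    (Matrix.toEuclideanCLM (𝕜 := ℂ) M : EuclideanSpace ℂ n →L[ℂ] EuclideanSpace ℂ n)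
      = stClm M := by
  apply ContinuousLinearMap.coe_injective
  exact Matrix.coe_toEuclideanCLM_eq_toEuclideanLin M

end SelfTestAux


/-- lifting a self-testing guarantee for single operators to products.
If the local isometry `V = V_A ⊗ V_B` carries `ψ` δ-close to `φ` and each `(A_j ⊗ I)ψ`
δ-close to `(Ã_j ⊗ I)φ`, with `‖A_j‖ ≤ 1`, and each `Ã_j` acts on `φ` as some `B̃_j` on the
other factor with `‖B̃_j‖ ≤ 1`, then `V(A₁⋯A_m ⊗ I)ψ` is `(2m+1)δ`-close to
`(Ã₁⋯Ã_m ⊗ I)φ`. -/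
theorem single_to_multiple_observable {dA dB dA' dB' m : ℕ} (hm : 1 < m)
    (ψ : EuclideanSpace ℂ (Fin dA × Fin dB))
    (φ : EuclideanSpace ℂ (Fin dA' × Fin dB'))
    (A : Fin m → Matrix (Fin dA) (Fin dA) ℂ)
    (hA : ∀ j, ‖Matrix.toEuclideanCLM (𝕜 := ℂ) (A j)‖ ≤ 1)
    (Atil : Fin m → Matrix (Fin dA') (Fin dA') ℂ)
    (VA : Matrix (Fin dA') (Fin dA) ℂ) (hVA : VA.conjTranspose * VA = 1)
    (VB : Matrix (Fin dB') (Fin dB) ℂ) (hVB : VB.conjTranspose * VB = 1)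
    (δ : ℝ)
    (hstate : ‖Matrix.toEuclideanLin (VA ⊗ₖ VB) ψ - φ‖ ≤ δ)
    (hobs : ∀ j,
      ‖Matrix.toEuclideanLin ((VA ⊗ₖ VB) * (A j ⊗ₖ (1 : Matrix (Fin dB) (Fin dB) ℂ))) ψ -
        Matrix.toEuclideanLin (Atil j ⊗ₖ (1 : Matrix (Fin dB') (Fin dB') ℂ)) φ‖ ≤ δ)
    (Btil : Fin m → Matrix (Fin dB') (Fin dB') ℂ)
    (hBnorm : ∀ j, ‖Matrix.toEuclideanCLM (𝕜 := ℂ) (Btil j)‖ ≤ 1)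
    (hBact : ∀ j,
      Matrix.toEuclideanLin (Atil j ⊗ₖ (1 : Matrix (Fin dB') (Fin dB') ℂ)) φ =
        Matrix.toEuclideanLin ((1 : Matrix (Fin dA') (Fin dA') ℂ) ⊗ₖ Btil j) φ) :
    ‖Matrix.toEuclideanLin
        ((VA ⊗ₖ VB) * (((List.finRange m).map A).prod ⊗ₖ (1 : Matrix (Fin dB) (Fin dB) ℂ))) ψ -
      Matrix.toEuclideanLin
        (((List.finRange m).map Atil).prod ⊗ₖ (1 : Matrix (Fin dB') (Fin dB') ℂ)) φ‖ ≤
      (2 * m + 1) * δ := by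
  classical
  have hδ : 0 ≤ δ := le_trans (norm_nonneg _) hstate
  set f : ℕ → Matrix (Fin dA) (Fin dA) ℂ := fun k => if h : k < m then A ⟨k, h⟩ else 1 with hf
  set ft : ℕ → Matrix (Fin dA') (Fin dA') ℂ := fun k => if h : k < m then Atil ⟨k, h⟩ else 1
    with hft
  set fb : ℕ → Matrix (Fin dB') (Fin dB') ℂ := fun k => if h : k < m then Btil ⟨k, h⟩ else 1
    with hfb
  set P : ℕ → Matrix (Fin dA) (Fin dA) ℂ := fun k => ((List.range k).map f).prod with hP
  set Pt : ℕ → Matrix (Fin dA') (Fin dA') ℂ := fun k => ((List.range k).map ft).prod with hPt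
  set Q : ℕ → Matrix (Fin dB') (Fin dB') ℂ := fun k => (((List.range k).map fb).reverse).prod
    with hQ
  have hP0 : P 0 = 1 := by simp [hP]
  have hPt0 : Pt 0 = 1 := by simp [hPt]
  have hQ0 : Q 0 = 1 := by simp [hQ]
  have hPsucc : ∀ k, P (k + 1) = P k * f k := by intro k; simp [hP, List.range_succ]
  have hPtsucc : ∀ k, Pt (k + 1) = Pt k * ft k := by intro k; simp [hPt, List.range_succ]
  have hQsucc : ∀ k, Q (k + 1) = fb k * Q k := by intro k; simp [hQ, List.range_succ]
  have hPA : ((List.finRange m).map A).prod = P m := by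
    have h1 : (List.finRange m).map A = (List.range m).map f := by
      rw [← List.map_coe_finRange_eq_range, List.map_map]
      exact List.map_congr_left (fun j _ => by simp [hf, j.isLt])
    rw [h1]
  have hPAt : ((List.finRange m).map Atil).prod = Pt m := by
    have h1 : (List.finRange m).map Atil = (List.range m).map ft := by
      rw [← List.map_coe_finRange_eq_range, List.map_map]
      exact List.map_congr_left (fun j _ => by simp [hft, j.isLt])
    rw [h1]
  have hfn : ∀ k, ‖stClm (f k)‖ ≤ 1 := by
    intro k
    by_cases h : k < m
    · rw [show f k = A ⟨k, h⟩ from by simp [hf, h], ← st_toEuclideanCLM_eq]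
      exact hA ⟨k, h⟩
    · rw [show f k = 1 from by simp [hf, h]]
      exact norm_stClm_one
  have hfbn : ∀ k, ‖stClm (fb k)‖ ≤ 1 := by
    intro k
    by_cases h : k < m
    · rw [show fb k = Btil ⟨k, h⟩ from by simp [hfb, h], ← st_toEuclideanCLM_eq]
      exact hBnorm ⟨k, h⟩
    · rw [show fb k = 1 from by simp [hfb, h]]
      exact norm_stClm_one
  have hPn : ∀ k, ‖stClm (P k)‖ ≤ 1 := by
    intro k
    induction k with
    | zero => rw [hP0]; exact norm_stClm_one
    | succ k ih =>
      rw [hPsucc]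
      refine (norm_stClm_mul _ _).trans ?_
      have h1 := hfn k
      have h2 := norm_nonneg (stClm (P k))
      have h3 := norm_nonneg (stClm (f k))
      nlinarith
  have hQn : ∀ k, ‖stClm (Q k)‖ ≤ 1 := by
    intro k
    induction k with
    | zero => rw [hQ0]; exact norm_stClm_one
    | succ k ih =>
      rw [hQsucc]
      refine (norm_stClm_mul _ _).trans ?_
      have h1 := hfbn k
      have h2 := norm_nonneg (stClm (Q k))
      have h3 := norm_nonneg (stClm (fb k))
      nlinarith
  have hQkron : ∀ k, ‖stClm ((1 : Matrix (Fin dA') (Fin dA') ℂ) ⊗ₖ Q k)‖ ≤ 1 :=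
    fun k => (norm_one_kron_stClm _).trans (hQn k)
  have hfbkron : ∀ k, ‖stClm ((1 : Matrix (Fin dA') (Fin dA') ℂ) ⊗ₖ fb k)‖ ≤ 1 :=
    fun k => (norm_one_kron_stClm _).trans (hfbn k)
  -- the Ã-product acts on φ as the reversed B̃-product
  have hAct : ∀ k, k ≤ m →
      stClm (Pt k ⊗ₖ (1 : Matrix (Fin dB') (Fin dB') ℂ)) φ =
        stClm ((1 : Matrix (Fin dA') (Fin dA') ℂ) ⊗ₖ Q k) φ := by
    intro k
    induction k with
    | zero => intro _; rw [hPt0, hQ0]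
    | succ k ih =>
      intro hk1
      have hk : k < m := hk1
      have ihh := ih hk.le
      have hb : stClm (ft k ⊗ₖ (1 : Matrix (Fin dB') (Fin dB') ℂ)) φ =
          stClm ((1 : Matrix (Fin dA') (Fin dA') ℂ) ⊗ₖ fb k) φ := by
        rw [show ft k = Atil ⟨k, hk⟩ from by simp [hft, hk],
          show fb k = Btil ⟨k, hk⟩ from by simp [hfb, hk]]
        exact hBact ⟨k, hk⟩
      have e1 : Pt (k + 1) ⊗ₖ (1 : Matrix (Fin dB') (Fin dB') ℂ) =
          (Pt k ⊗ₖ (1 : Matrix (Fin dB') (Fin dB') ℂ)) *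
            (ft k ⊗ₖ (1 : Matrix (Fin dB') (Fin dB') ℂ)) := by
        rw [hPtsucc, ← Matrix.mul_kronecker_mul, one_mul]
      have e2 : (Pt k ⊗ₖ (1 : Matrix (Fin dB') (Fin dB') ℂ)) *
            ((1 : Matrix (Fin dA') (Fin dA') ℂ) ⊗ₖ fb k) =
          ((1 : Matrix (Fin dA') (Fin dA') ℂ) ⊗ₖ fb k) *
            (Pt k ⊗ₖ (1 : Matrix (Fin dB') (Fin dB') ℂ)) := by
        rw [← Matrix.mul_kronecker_mul, ← Matrix.mul_kronecker_mul, one_mul, mul_one,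
          one_mul, mul_one]
      have e3 : ((1 : Matrix (Fin dA') (Fin dA') ℂ) ⊗ₖ fb k) *
            ((1 : Matrix (Fin dA') (Fin dA') ℂ) ⊗ₖ Q k) =
          (1 : Matrix (Fin dA') (Fin dA') ℂ) ⊗ₖ Q (k + 1) := by
        rw [← Matrix.mul_kronecker_mul, one_mul, hQsucc]
      calc stClm (Pt (k + 1) ⊗ₖ (1 : Matrix (Fin dB') (Fin dB') ℂ)) φ
          = stClm (Pt k ⊗ₖ (1 : Matrix (Fin dB') (Fin dB') ℂ))
              (stClm (ft k ⊗ₖ (1 : Matrix (Fin dB') (Fin dB') ℂ)) φ) := by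
            rw [e1, stClm_mul]
        _ = stClm (Pt k ⊗ₖ (1 : Matrix (Fin dB') (Fin dB') ℂ))
              (stClm ((1 : Matrix (Fin dA') (Fin dA') ℂ) ⊗ₖ fb k) φ) := by rw [hb]
        _ = stClm ((Pt k ⊗ₖ (1 : Matrix (Fin dB') (Fin dB') ℂ)) *
              ((1 : Matrix (Fin dA') (Fin dA') ℂ) ⊗ₖ fb k)) φ := (stClm_mul _ _ _).symm
        _ = stClm (((1 : Matrix (Fin dA') (Fin dA') ℂ) ⊗ₖ fb k) *
              (Pt k ⊗ₖ (1 : Matrix (Fin dB') (Fin dB') ℂ))) φ := by rw [e2]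
        _ = stClm ((1 : Matrix (Fin dA') (Fin dA') ℂ) ⊗ₖ fb k)
              (stClm (Pt k ⊗ₖ (1 : Matrix (Fin dB') (Fin dB') ℂ)) φ) := stClm_mul _ _ _
        _ = stClm ((1 : Matrix (Fin dA') (Fin dA') ℂ) ⊗ₖ fb k)
              (stClm ((1 : Matrix (Fin dA') (Fin dA') ℂ) ⊗ₖ Q k) φ) := by rw [ihh]
        _ = stClm (((1 : Matrix (Fin dA') (Fin dA') ℂ) ⊗ₖ fb k) *
              ((1 : Matrix (Fin dA') (Fin dA') ℂ) ⊗ₖ Q k)) φ := (stClm_mul _ _ _).symm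
        _ = stClm ((1 : Matrix (Fin dA') (Fin dA') ℂ) ⊗ₖ Q (k + 1)) φ := by rw [e3]
  -- main induction
  have hMain : ∀ k, k ≤ m →
      ‖stClm ((VA ⊗ₖ VB) * (P k ⊗ₖ (1 : Matrix (Fin dB) (Fin dB) ℂ))) ψ -
        stClm ((1 : Matrix (Fin dA') (Fin dA') ℂ) ⊗ₖ Q k) (stClm (VA ⊗ₖ VB) ψ)‖ ≤
        2 * k * δ := by
    intro k
    induction k with
    | zero =>
      intro _
      rw [hP0, hQ0, Matrix.one_kronecker_one, Matrix.one_kronecker_one, Matrix.mul_one, stClm_one,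
        sub_self, norm_zero]
      simp
    | succ k ih =>
      intro hk1
      have hk : k < m := hk1
      have ihh := ih hk.le
      -- bound on the single-step error vector
      have hw : ‖stClm ((VA ⊗ₖ VB) * (f k ⊗ₖ (1 : Matrix (Fin dB) (Fin dB) ℂ))) ψ -
          stClm ((1 : Matrix (Fin dA') (Fin dA') ℂ) ⊗ₖ fb k) (stClm (VA ⊗ₖ VB) ψ)‖ ≤
          2 * δ := by
        have h1 : ‖stClm ((VA ⊗ₖ VB) * (f k ⊗ₖ (1 : Matrix (Fin dB) (Fin dB) ℂ))) ψ -
            stClm (ft k ⊗ₖ (1 : Matrix (Fin dB') (Fin dB') ℂ)) φ‖ ≤ δ := by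
          rw [show f k = A ⟨k, hk⟩ from by simp [hf, hk],
            show ft k = Atil ⟨k, hk⟩ from by simp [hft, hk]]
          exact hobs ⟨k, hk⟩
        have h2 : stClm (ft k ⊗ₖ (1 : Matrix (Fin dB') (Fin dB') ℂ)) φ =
            stClm ((1 : Matrix (Fin dA') (Fin dA') ℂ) ⊗ₖ fb k) φ := by
          rw [show ft k = Atil ⟨k, hk⟩ from by simp [hft, hk],
            show fb k = Btil ⟨k, hk⟩ from by simp [hfb, hk]]
          exact hBact ⟨k, hk⟩
        have h3 : ‖stClm ((1 : Matrix (Fin dA') (Fin dA') ℂ) ⊗ₖ fb k) φ -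
            stClm ((1 : Matrix (Fin dA') (Fin dA') ℂ) ⊗ₖ fb k) (stClm (VA ⊗ₖ VB) ψ)‖ ≤ δ := by
          rw [← map_sub]
          refine ((stClm ((1 : Matrix (Fin dA') (Fin dA') ℂ) ⊗ₖ fb k)).le_opNorm
            (φ - stClm (VA ⊗ₖ VB) ψ)).trans ?_
          have h4 : ‖φ - stClm (VA ⊗ₖ VB) ψ‖ ≤ δ := by
            rw [norm_sub_rev]; exact hstate
          calc ‖stClm ((1 : Matrix (Fin dA') (Fin dA') ℂ) ⊗ₖ fb k)‖ *
                ‖φ - stClm (VA ⊗ₖ VB) ψ‖ ≤ 1 * δ :=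
              mul_le_mul (hfbkron k) h4 (norm_nonneg _) zero_le_one
            _ = δ := one_mul δ
        calc ‖stClm ((VA ⊗ₖ VB) * (f k ⊗ₖ (1 : Matrix (Fin dB) (Fin dB) ℂ))) ψ -
              stClm ((1 : Matrix (Fin dA') (Fin dA') ℂ) ⊗ₖ fb k) (stClm (VA ⊗ₖ VB) ψ)‖
            = ‖(stClm ((VA ⊗ₖ VB) * (f k ⊗ₖ (1 : Matrix (Fin dB) (Fin dB) ℂ))) ψ -
                stClm (ft k ⊗ₖ (1 : Matrix (Fin dB') (Fin dB') ℂ)) φ) +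
                (stClm (ft k ⊗ₖ (1 : Matrix (Fin dB') (Fin dB') ℂ)) φ -
                stClm ((1 : Matrix (Fin dA') (Fin dA') ℂ) ⊗ₖ fb k)
                  (stClm (VA ⊗ₖ VB) ψ))‖ := by rw [sub_add_sub_cancel]
          _ ≤ _ + _ := norm_add_le _ _
          _ ≤ δ + δ := add_le_add h1 (h2 ▸ h3)
          _ = 2 * δ := by ring
      -- the contraction operator
      have hE : ‖stClm ((VA * P k * VA.conjTranspose) ⊗ₖ
          (1 : Matrix (Fin dB') (Fin dB') ℂ))‖ ≤ 1 := by
        refine (norm_stClm_kron_one _).trans ?_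
        refine (norm_stClm_mul _ _).trans ?_
        have h4 : ‖stClm (VA * P k)‖ ≤ 1 := by
          refine (norm_stClm_mul _ _).trans ?_
          have := norm_stClm_isometry VA hVA
          have h5 := hPn k
          have h6 := norm_nonneg (stClm VA)
          have h7 := norm_nonneg (stClm (P k))
          nlinarith
        have h5 : ‖stClm VA.conjTranspose‖ ≤ 1 := by
          rw [norm_stClm_conjTranspose]; exact norm_stClm_isometry VA hVA
        have h6 := norm_nonneg (stClm (VA * P k))
        have h7 := norm_nonneg (stClm VA.conjTranspose)
        nlinarith
      -- matrix identities
      have I1 : (VA ⊗ₖ VB) * (P (k + 1) ⊗ₖ (1 : Matrix (Fin dB) (Fin dB) ℂ)) =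
          ((VA * P k * VA.conjTranspose) ⊗ₖ (1 : Matrix (Fin dB') (Fin dB') ℂ)) *
            ((VA ⊗ₖ VB) * (f k ⊗ₖ (1 : Matrix (Fin dB) (Fin dB) ℂ))) := by
        rw [hPsucc]
        simp only [← Matrix.mul_kronecker_mul, Matrix.mul_one, Matrix.one_mul,
          Matrix.mul_assoc]
        rw [← Matrix.mul_assoc VA.conjTranspose VA (f k), hVA, Matrix.one_mul]
      have I2 : ((VA * P k * VA.conjTranspose) ⊗ₖ (1 : Matrix (Fin dB') (Fin dB') ℂ)) *
            ((1 : Matrix (Fin dA') (Fin dA') ℂ) ⊗ₖ fb k) * (VA ⊗ₖ VB) =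
          ((1 : Matrix (Fin dA') (Fin dA') ℂ) ⊗ₖ fb k) *
            ((VA ⊗ₖ VB) * (P k ⊗ₖ (1 : Matrix (Fin dB) (Fin dB) ℂ))) := by
        simp only [← Matrix.mul_kronecker_mul, Matrix.mul_one, Matrix.one_mul,
          Matrix.mul_assoc]
        rw [hVA, Matrix.mul_one]
      have I3 : ((1 : Matrix (Fin dA') (Fin dA') ℂ) ⊗ₖ fb k) *
            ((1 : Matrix (Fin dA') (Fin dA') ℂ) ⊗ₖ Q k) =
          (1 : Matrix (Fin dA') (Fin dA') ℂ) ⊗ₖ Q (k + 1) := by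
        rw [← Matrix.mul_kronecker_mul, one_mul, hQsucc]
      -- rewrite the step difference
      have key : stClm ((VA ⊗ₖ VB) * (P (k + 1) ⊗ₖ (1 : Matrix (Fin dB) (Fin dB) ℂ))) ψ -
          stClm ((1 : Matrix (Fin dA') (Fin dA') ℂ) ⊗ₖ Q (k + 1)) (stClm (VA ⊗ₖ VB) ψ) =
          stClm ((VA * P k * VA.conjTranspose) ⊗ₖ (1 : Matrix (Fin dB') (Fin dB') ℂ))
            (stClm ((VA ⊗ₖ VB) * (f k ⊗ₖ (1 : Matrix (Fin dB) (Fin dB) ℂ))) ψ -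
              stClm ((1 : Matrix (Fin dA') (Fin dA') ℂ) ⊗ₖ fb k) (stClm (VA ⊗ₖ VB) ψ)) +
          stClm ((1 : Matrix (Fin dA') (Fin dA') ℂ) ⊗ₖ fb k)
            (stClm ((VA ⊗ₖ VB) * (P k ⊗ₖ (1 : Matrix (Fin dB) (Fin dB) ℂ))) ψ -
              stClm ((1 : Matrix (Fin dA') (Fin dA') ℂ) ⊗ₖ Q k) (stClm (VA ⊗ₖ VB) ψ)) := by
        have eA : stClm ((VA ⊗ₖ VB) * (P (k + 1) ⊗ₖ (1 : Matrix (Fin dB) (Fin dB) ℂ))) ψ =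
            stClm ((VA * P k * VA.conjTranspose) ⊗ₖ (1 : Matrix (Fin dB') (Fin dB') ℂ))
              (stClm ((VA ⊗ₖ VB) * (f k ⊗ₖ (1 : Matrix (Fin dB) (Fin dB) ℂ))) ψ) := by
          rw [I1, stClm_mul]
        have eB : stClm ((VA * P k * VA.conjTranspose) ⊗ₖ (1 : Matrix (Fin dB') (Fin dB') ℂ))
              (stClm ((1 : Matrix (Fin dA') (Fin dA') ℂ) ⊗ₖ fb k) (stClm (VA ⊗ₖ VB) ψ)) =
            stClm ((1 : Matrix (Fin dA') (Fin dA') ℂ) ⊗ₖ fb k)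
              (stClm ((VA ⊗ₖ VB) * (P k ⊗ₖ (1 : Matrix (Fin dB) (Fin dB) ℂ))) ψ) := by
          rw [← stClm_mul, ← stClm_mul, ← stClm_mul, I2]
        have eC : stClm ((1 : Matrix (Fin dA') (Fin dA') ℂ) ⊗ₖ Q (k + 1))
              (stClm (VA ⊗ₖ VB) ψ) =
            stClm ((1 : Matrix (Fin dA') (Fin dA') ℂ) ⊗ₖ fb k)
              (stClm ((1 : Matrix (Fin dA') (Fin dA') ℂ) ⊗ₖ Q k) (stClm (VA ⊗ₖ VB) ψ)) := by
          rw [← I3, stClm_mul]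
        rw [map_sub, map_sub, eA, eB, eC]
        abel
      rw [key]
      have t1 : ‖stClm ((VA * P k * VA.conjTranspose) ⊗ₖ (1 : Matrix (Fin dB') (Fin dB') ℂ))
            (stClm ((VA ⊗ₖ VB) * (f k ⊗ₖ (1 : Matrix (Fin dB) (Fin dB) ℂ))) ψ -
              stClm ((1 : Matrix (Fin dA') (Fin dA') ℂ) ⊗ₖ fb k) (stClm (VA ⊗ₖ VB) ψ))‖ ≤
          1 * (2 * δ) := by
        refine ((stClm ((VA * P k * VA.conjTranspose) ⊗ₖ
          (1 : Matrix (Fin dB') (Fin dB') ℂ))).le_opNorm _).trans ?_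
        exact mul_le_mul hE hw (norm_nonneg _) zero_le_one
      have t2 : ‖stClm ((1 : Matrix (Fin dA') (Fin dA') ℂ) ⊗ₖ fb k)
            (stClm ((VA ⊗ₖ VB) * (P k ⊗ₖ (1 : Matrix (Fin dB) (Fin dB) ℂ))) ψ -
              stClm ((1 : Matrix (Fin dA') (Fin dA') ℂ) ⊗ₖ Q k) (stClm (VA ⊗ₖ VB) ψ))‖ ≤
          1 * (2 * k * δ) := by
        refine ((stClm ((1 : Matrix (Fin dA') (Fin dA') ℂ) ⊗ₖ fb k)).le_opNorm _).trans ?_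
        exact mul_le_mul (hfbkron k) ihh (norm_nonneg _) zero_le_one
      refine (norm_add_le _ _).trans ((add_le_add t1 t2).trans ?_)
      push_cast
      nlinarith
  -- final assembly
  have h7 := hMain m le_rfl
  have h8 := hAct m le_rfl
  show ‖stClm ((VA ⊗ₖ VB) * (((List.finRange m).map A).prod ⊗ₖ
      (1 : Matrix (Fin dB) (Fin dB) ℂ))) ψ -
    stClm (((List.finRange m).map Atil).prod ⊗ₖ (1 : Matrix (Fin dB') (Fin dB') ℂ)) φ‖ ≤
    (2 * m + 1) * δ
  rw [hPA, hPAt]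
  have h9 : ‖stClm ((1 : Matrix (Fin dA') (Fin dA') ℂ) ⊗ₖ Q m) (stClm (VA ⊗ₖ VB) ψ) -
      stClm ((1 : Matrix (Fin dA') (Fin dA') ℂ) ⊗ₖ Q m) φ‖ ≤ δ := by
    rw [← map_sub]
    refine ((stClm ((1 : Matrix (Fin dA') (Fin dA') ℂ) ⊗ₖ Q m)).le_opNorm
      (stClm (VA ⊗ₖ VB) ψ - φ)).trans ?_
    calc ‖stClm ((1 : Matrix (Fin dA') (Fin dA') ℂ) ⊗ₖ Q m)‖ * ‖stClm (VA ⊗ₖ VB) ψ - φ‖ ≤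
        1 * δ := mul_le_mul (hQkron m) hstate (norm_nonneg _) zero_le_one
      _ = δ := one_mul δ
  calc ‖stClm ((VA ⊗ₖ VB) * (P m ⊗ₖ (1 : Matrix (Fin dB) (Fin dB) ℂ))) ψ -
        stClm (Pt m ⊗ₖ (1 : Matrix (Fin dB') (Fin dB') ℂ)) φ‖
      = ‖(stClm ((VA ⊗ₖ VB) * (P m ⊗ₖ (1 : Matrix (Fin dB) (Fin dB) ℂ))) ψ -
          stClm ((1 : Matrix (Fin dA') (Fin dA') ℂ) ⊗ₖ Q m) (stClm (VA ⊗ₖ VB) ψ)) +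
          (stClm ((1 : Matrix (Fin dA') (Fin dA') ℂ) ⊗ₖ Q m) (stClm (VA ⊗ₖ VB) ψ) -
          stClm ((1 : Matrix (Fin dA') (Fin dA') ℂ) ⊗ₖ Q m) φ)‖ := by
        rw [h8, sub_add_sub_cancel]
    _ ≤ _ + _ := norm_add_le _ _
    _ ≤ 2 * m * δ + δ := add_le_add h7 h9
    _ = (2 * m + 1) * δ := by ring
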